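/- Brezis–Browder ordering principle: let (S,⪯) be a nonempty preordered set and 𝒩 : S → ℝ be a function that is bounded above and nondecreasing with respect to ⪯ (s₁ ⪯ s₂ implies 𝒩(s₁) ≤ 𝒩(s₂)). Assume every increasing sequence s₁ ⪯ s₂ ⪯ ⋯ in S has an upper bound in S. Then for each s₀ ∈ S there exists an 𝒩-maximal element s ∈ S with s₀ ⪯ s, where s is 𝒩-maximal means: s ⪯ s₊ implies 𝒩(s) = 𝒩(s₊). -/
import Mathlib


/-- Brezis–Browder ordering principle: if `(S,⪯)` is a nonempty preordered set,
`𝒩 : S → ℝ` is bounded above and nondecreasing, and every increasing sequence has an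
upper bound, then every `s₀ ∈ S` is dominated by an `𝒩`-maximal element. -/
theorem brezis_browder {S : Type*} [Nonempty S] (r : S → S → Prop)
    (hrefl : ∀ s, r s s) (htrans : ∀ a b c, r a b → r b c → r a c)
    (N : S → ℝ) (hbdd : ∃ M : ℝ, ∀ s, N s ≤ M)
    (hmono : ∀ a b, r a b → N a ≤ N b)
    (hub : ∀ f : ℕ → S, (∀ n, r (f n) (f (n + 1))) → ∃ s, ∀ n, r (f n) s) :
    ∀ s₀ : S, ∃ s : S, r s₀ s ∧ ∀ sPlus, r s sPlus → N s = N sPlus := by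
  intro s₀
  obtain ⟨M, hM⟩ := hbdd
  set β : S → ℝ := fun x => sSup (N '' {t | r x t}) with hβ
  have hne : ∀ x : S, (N '' {t | r x t}).Nonempty := fun x => ⟨N x, x, hrefl x, rfl⟩
  have hbddS : ∀ x : S, BddAbove (N '' {t | r x t}) := by
    intro x
    exact ⟨M, by rintro y ⟨t, -, rfl⟩; exact hM t⟩
  have hle : ∀ x t, r x t → N t ≤ β x := by
    intro x t h
    exact le_csSup (hbddS x) ⟨t, h, rfl⟩
  have hstep : ∀ x : S, ∀ n : ℕ, ∃ t : S, r x t ∧ β x - 1 / (n + 1) < N t := by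
    intro x n
    have hε : (0:ℝ) < 1 / (n + 1) := by positivity
    have : β x - 1 / (n + 1) < β x := by linarith
    obtain ⟨y, ⟨t, ht, rfl⟩, hy⟩ := exists_lt_of_lt_csSup (hne x) this
    exact ⟨t, ht, hy⟩
  choose step hstep1 hstep2 using hstep
  let f : ℕ → S := fun n => Nat.rec s₀ (fun n x => step x n) n
  have hf : ∀ n, r (f n) (f (n + 1)) := fun n => hstep1 (f n) n
  obtain ⟨s, hs⟩ := hub f hf
  refine ⟨s, hs 0, ?_⟩
  intro t ht
  refine le_antisymm (hmono s t ht) ?_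
  refine le_of_forall_pos_le_add ?_
  intro ε hε
  obtain ⟨n, hn⟩ := exists_nat_one_div_lt hε
  have h1 : N t ≤ β (f n) := hle (f n) t (htrans _ _ _ (hs n) ht)
  have h2 : β (f n) - 1 / (n + 1) < N (f (n + 1)) := hstep2 (f n) n
  have h3 : N (f (n + 1)) ≤ N s := hmono _ _ (hs (n + 1))
  have : (1:ℝ) / (n + 1) < ε := by exact_mod_cast hn
  linarith
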